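/- Suppose char R = 4, G is abelian with index-2 subgroup N, σ : G → {±1} is the homomorphism with kernel N, * is an involution on G that is the identity on N and satisfies x* ≠ x for all x ∉ N. Then the set of skew-symmetric elements (RG)⁻ under the oriented involution ♯ is anticommutative: αβ = −βα for all α, β ∈ (RG)⁻. -/

import Mathlib

/-- The oriented involution on the group ring. -/
noncomputable def orientedSharp {R : Type*} [CommRing R] {G : Type*} [Group G]
    (st : G → G) (σ : G →* ℤˣ) (α : MonoidAlgebra R G) : MonoidAlgebra R G :=
  Finsupp.sum α.coeff fun g r => MonoidAlgebra.single (st g) (((σ g : ℤ) : R) * r)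

private lemma ite_add_ite_self_eq_zero {R : Type*} [CommRing R] {c : Prop} [Decidable c]
    {x : R} (h : x + x = 0) : (if c then x else 0) + (if c then x else 0) = 0 := by
  split_ifs with hc
  · exact h
  · simp

/-- if `char R = 4`, `G` is abelian with index-2 subgroup
`N = ker σ`, `*` is the identity on `N` and moves every element outside
`N`, then the skew-symmetric elements of `RG` anticommute. -/
theorem skew_anticommute_abelian_case {R : Type*} [CommRing R] {G : Type*} [Group G]
    (hchar : ringChar R = 4)
    (hab : ∀ g h : G, g * h = h * g)
    (st : G → G) (hst : ∀ g h : G, st (g * h) = st h * st g)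
    (hst2 : ∀ g : G, st (st g) = g)
    (σ : G →* ℤˣ) (hidx : σ.ker.index = 2)
    (hN : ∀ n : G, n ∈ σ.ker → st n = n)
    (hout : ∀ x : G, x ∉ σ.ker → st x ≠ x) :
    ∀ α β : MonoidAlgebra R G,
      orientedSharp st σ α = -α → orientedSharp st σ β = -β → α * β = -(β * α) := by
  classical
  intro α β hα hβ
  have h4 : (4 : R) = 0 := by
    have h := ringChar.Nat.cast_ringChar (R := R)
    rw [hchar] at h
    exact_mod_cast h
  -- σ is -1 outside its kernel
  have σval : ∀ g : G, g ∉ σ.ker → σ g = -1 := by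
    intro g hg
    rcases Int.units_eq_one_or (σ g) with h | h
    · exact absurd h hg
    · exact h
  -- st maps the complement of the kernel to itself
  have stout : ∀ g : G, g ∉ σ.ker → st g ∉ σ.ker := by
    intro g hg hmem
    have : st (st g) = st g := hN _ hmem
    rw [hst2] at this
    exact hout g hg this.symm
  -- pointwise skewness
  have key : ∀ γ : MonoidAlgebra R G, orientedSharp st σ γ = -γ →
      ∀ h : G, ((σ (st h) : ℤ) : R) * γ.coeff (st h) = - γ.coeff h := by
    intro γ hγ h
    have h1 : (orientedSharp st σ γ).coeff h = (-γ).coeff h := by rw [hγ]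
    rw [MonoidAlgebra.coeff_neg, Finsupp.neg_apply] at h1
    rw [← h1]
    unfold orientedSharp
    rw [MonoidAlgebra.coeff_finsuppSum]
    simp only [MonoidAlgebra.coeff_single]
    rw [Finsupp.sum_apply, Finsupp.sum, Finset.sum_eq_single (st h)]
    · rw [Finsupp.single_apply, if_pos (hst2 h)]
    · intro b _ hb
      rw [Finsupp.single_apply, if_neg]
      intro e
      exact hb (by rw [← e, hst2])
    · intro hmem
      rw [Finsupp.notMem_support_iff.mp hmem, Finsupp.single_apply, mul_zero]
      simp
  -- the two key consequences of skewness
  have two_zero : ∀ γ : MonoidAlgebra R G, orientedSharp st σ γ = -γ →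
      ∀ g : G, g ∈ σ.ker → γ.coeff g + γ.coeff g = 0 := by
    intro γ hγ g hg
    have h1 := key γ hγ g
    rw [hN g hg, MonoidHom.mem_ker.mp hg] at h1
    simp only [Units.val_one, Int.cast_one, one_mul] at h1
    linear_combination h1
  have st_fix : ∀ γ : MonoidAlgebra R G, orientedSharp st σ γ = -γ →
      ∀ g : G, g ∉ σ.ker → γ.coeff (st g) = γ.coeff g := by
    intro γ hγ g hg
    have h1 := key γ hγ g
    rw [σval _ (stout g hg)] at h1
    simp only [Units.val_neg, Units.val_one, Int.cast_neg, Int.cast_one, neg_one_mul] at h1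
    linear_combination -h1
  -- commutativity of the group algebra
  have hcomm : β * α = α * β := by
    refine MonoidAlgebra.ext <| Finsupp.ext fun x => ?_
    rw [MonoidAlgebra.coeff_mul, MonoidAlgebra.coeff_mul, Finsupp.sum_comm]
    refine Finsupp.sum_congr fun g _ => Finsupp.sum_congr fun k _ => ?_
    rw [hab k g, mul_comm]
  -- the main computation : α*β + α*β = 0
  have hzero : α * β + α * β = 0 := by
    refine MonoidAlgebra.ext <| Finsupp.ext fun h => ?_
    rw [MonoidAlgebra.coeff_add, Finsupp.add_apply, MonoidAlgebra.coeff_zero, Finsupp.zero_apply]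
    have mulco : (α * β).coeff h = ∑ p ∈ α.coeff.support ×ˢ β.coeff.support,
        (if p.1 * p.2 = h then α.coeff p.1 * β.coeff p.2 else 0) := by
      rw [MonoidAlgebra.coeff_mul, Finset.sum_product]
      simp only [Finsupp.sum]
    rw [mulco, ← Finset.sum_add_distrib]
    refine Finset.sum_involution (fun p _ => (st p.1, st p.2)) ?_ ?_ ?_ ?_
    · -- sum of paired terms is zero
      rintro ⟨g, k⟩ hp
      simp only
      by_cases hg : g ∈ σ.ker
      · rw [hN g hg]
        rw [ite_add_ite_self_eq_zero (by linear_combination β.coeff k * two_zero α hα g hg),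
          ite_add_ite_self_eq_zero (by linear_combination β.coeff (st k) * two_zero α hα g hg),
          add_zero]
      · by_cases hk : k ∈ σ.ker
        · rw [hN k hk]
          rw [ite_add_ite_self_eq_zero (by linear_combination α.coeff g * two_zero β hβ k hk),
            ite_add_ite_self_eq_zero (by linear_combination α.coeff (st g) * two_zero β hβ k hk),
            add_zero]
        · have hcondeq : st g * st k = g * k := by
            have h1 : g * k ∈ σ.ker := by
              rw [MonoidHom.mem_ker, map_mul, σval g hg, σval k hk]
              simp
            calc st g * st k = st (k * g) := (hst k g).symm
              _ = st (g * k) := by rw [hab k g]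
              _ = g * k := hN _ h1
          rw [st_fix α hα g hg, st_fix β hβ k hk, hcondeq]
          split_ifs with hc
          · linear_combination (α.coeff g * β.coeff k) * h4
          · simp
    · -- no relevant fixed points
      rintro ⟨g, k⟩ hp hval heq
      simp only [Prod.mk.injEq] at heq
      by_cases hg : g ∈ σ.ker
      · exact hval (by
          show (if g * k = h then α.coeff g * β.coeff k else 0) + (if g * k = h then α.coeff g * β.coeff k else 0) = 0
          exact ite_add_ite_self_eq_zero (by linear_combination β.coeff k * two_zero α hα g hg))
      · exact hout g hg heq.1
    · -- the involution maps the index set to itself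
      rintro ⟨g, k⟩ hp
      rw [Finset.mem_product] at hp ⊢
      simp only [Finsupp.mem_support_iff] at hp ⊢
      constructor
      · by_cases hg : g ∈ σ.ker
        · rw [hN g hg]; exact hp.1
        · rw [st_fix α hα g hg]; exact hp.1
      · by_cases hk : k ∈ σ.ker
        · rw [hN k hk]; exact hp.2
        · rw [st_fix β hβ k hk]; exact hp.2
    · -- it is an involution
      rintro ⟨g, k⟩ hp
      simp [hst2]
  rw [hcomm]
  exact eq_neg_of_add_eq_zero_left hzero
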